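/- arXiv:1501.00689 — 2 statements merged into one kernel-verified Lean document; each statement's English description precedes it below -/
import Mathlib

section
/- Let L be a limit operator on a set X and let D be an open subset of the topological space (X, τ_L). Define the restricted limit operator L|_D on D by L|_D(σ) := L(σ) ∩ D for every sequence σ with values in D. Then L|_D is a limit operator on D, and the subspace topology induced on D by τ_L coincides with the topology τ_{L|_D} on D derived from L|_D. -/
open Set Filter Topology

universe u

/-- A limit operator on `X`: a map from sequences to sets of "limits",
compatible with subsequences. -/
def IsLimitOp {X : Type u} (L : (ℕ → X) → Set X) : Prop :=
  ∀ (σ : ℕ → X) (φ : ℕ → ℕ), StrictMono φ → L σ ⊆ L (σ ∘ φ)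

/-- `C` is sequentially closed with respect to the limit operator `L`. -/
def SeqClosedFor {X : Type u} (L : (ℕ → X) → Set X) (C : Set X) : Prop :=
  ∀ σ : ℕ → X, (∀ n, σ n ∈ C) → L σ ⊆ C

/-- The topology derived from a limit operator `L`: its closed sets are exactly
the sets `C` such that `L σ ⊆ C` for every sequence `σ` with values in `C`. -/
def derivedTop {X : Type u} (L : (ℕ → X) → Set X) (hL : IsLimitOp L) :
    TopologicalSpace X :=
  TopologicalSpace.ofClosed {C | SeqClosedFor L C}
    (fun σ h => absurd (h 0) (Set.notMem_empty _))
    (fun A hA σ hσ p hp => by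
      rw [Set.mem_sInter]
      intro C hC
      exact hA hC σ (fun n => Set.mem_sInter.mp (hσ n) C hC) hp)
    (by
      intro C hC B hB σ hσ p hp
      by_cases hinf : {n | σ n ∈ C}.Infinite
      · exact Or.inl (hC _ (fun n => Nat.nth_mem_of_infinite hinf n)
          (hL σ _ (Nat.nth_strictMono hinf) hp))
      · have hfin : {n | σ n ∈ C}.Finite := Set.not_infinite.mp hinf
        have hBinf : {n | σ n ∈ B}.Infinite :=
          Set.Infinite.mono (fun n hn => (hσ n).resolve_left hn) hfin.infinite_compl
        exact Or.inr (hB _ (fun n => Nat.nth_mem_of_infinite hBinf n)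
          (hL σ _ (Nat.nth_strictMono hBinf) hp)))

/-- The limit operator associated to a topology `t`: it assigns to each sequence
the set of all its limits in `t`. -/
def assocLimOp {X : Type u} (t : TopologicalSpace X) : (ℕ → X) → Set X :=
  fun σ => {p | Filter.Tendsto σ Filter.atTop (@nhds X t p)}

theorem assocLimOp_isLimitOp {X : Type u} (t : TopologicalSpace X) :
    IsLimitOp (assocLimOp t) :=
  fun _σ _φ hφ _p hp => hp.comp hφ.tendsto_atTop

/-- `τ_Seq`: the topology derived from the limit operator associated to `t`. -/
def seqModTop {X : Type u} (t : TopologicalSpace X) : TopologicalSpace X :=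
  derivedTop (assocLimOp t) (assocLimOp_isLimitOp t)

/-- `L` is of first order on `D`. -/
def IsFirstOrderOpOn {X : Type u} (L : (ℕ → X) → Set X) (hL : IsLimitOp L)
    (D : Set X) : Prop :=
  ∀ σ : ℕ → X, (∀ n, σ n ∈ D) → ∀ p ∈ D,
    (p ∈ L σ ↔ Filter.Tendsto σ Filter.atTop (@nhds X (derivedTop L hL) p))

/-- `L` is of first order. -/
def IsFirstOrderOp {X : Type u} (L : (ℕ → X) → Set X) (hL : IsLimitOp L) : Prop :=
  ∀ (σ : ℕ → X) (p : X),
    p ∈ L σ ↔ Filter.Tendsto σ Filter.atTop (@nhds X (derivedTop L hL) p)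

/-- A limit operator is coherent if every constant sequence has its value as a limit. -/
def CoherentOp {X : Type u} (L : (ℕ → X) → Set X) : Prop :=
  ∀ x : X, x ∈ L (fun _ => x)

/-- The transfinite iterates of a limit operator: `L^1 σ = L σ` and, for `i ≠ 1`,
`L^i σ = {p | p ∈ L ρ for some sequence ρ with values in ⋃_{j<i} L^j σ}`. -/
noncomputable def iterOp {X : Type u} (L : (ℕ → X) → Set X) (σ : ℕ → X)
    (i : Ordinal.{0}) : Set X :=
  if i = 1 then L σ
  else {p | ∃ ρ : ℕ → X,
    (∀ n, ∃ j : Ordinal.{0}, ∃ _hj : j < i, ρ n ∈ iterOp L σ j) ∧ p ∈ L ρ}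
termination_by i

open Classical in
/-- The modified limit operator `L*` relative to a subset `D`. -/
noncomputable def modOp {X : Type u} (L : (ℕ → X) → Set X) (D : Set X) :
    (ℕ → X) → Set X := fun σ =>
  if ∃ φ : ℕ → ℕ, StrictMono φ ∧ ∃ p ∈ D, p ∈ L (σ ∘ φ) then L σ ∩ D else L σ

/-- The `D`-separating topology `τ*`: generated by the subbasis consisting of the
`t`-open sets together with the complements of compact subsets of `D`. -/
def sepTop {X : Type u} (t : TopologicalSpace X) (D : Set X) : TopologicalSpace X :=
  TopologicalSpace.generateFrom
    ({U : Set X | @IsOpen X t U} ∪ {V : Set X | ∃ K, K ⊆ D ∧ @IsCompact X t K ∧ V = Kᶜ})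

/-- Condition (A_Fin): `t'` refines `t`. -/
def AFin {X : Type u} (t t' : TopologicalSpace X) : Prop :=
  ∀ U : Set X, @IsOpen X t U → @IsOpen X t' U

/-- Condition (A_Sep): every `p ∈ D` and `q ∉ D` are separated by a `t`-open set
and a `t'`-open set. -/
def ASep {X : Type u} (t t' : TopologicalSpace X) (D : Set X) : Prop :=
  ∀ p ∈ D, ∀ q ∈ (Dᶜ : Set X), ∃ U V : Set X,
    @IsOpen X t U ∧ @IsOpen X t' V ∧ p ∈ U ∧ q ∈ V ∧ U ∩ V = ∅

/-- The restriction of a limit operator `L` to a subset `D`, as an operator on `↥D`: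
`L|_D(σ) = L(σ) ∩ D`. -/
def restrictOp {X : Type u} (L : (ℕ → X) → Set X) (D : Set X) :
    (ℕ → D) → Set D :=
  fun σ => {d : D | (d : X) ∈ L (fun n => (σ n : X))}


lemma isClosed_derivedTop_iff {X : Type u} (L : (ℕ → X) → Set X) (hL : IsLimitOp L)
    (C : Set X) : @IsClosed X (derivedTop L hL) C ↔ SeqClosedFor L C := by
  letI := derivedTop L hL
  rw [← isOpen_compl_iff]
  constructor
  · intro h
    have h' : SeqClosedFor L Cᶜᶜ := h
    rwa [compl_compl] at h'
  · intro h
    show SeqClosedFor L Cᶜᶜ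
    rwa [compl_compl]

theorem stmt_6 {X : Type u} (L : (ℕ → X) → Set X) (hL : IsLimitOp L)
    (D : Set X) (hD : @IsOpen X (derivedTop L hL) D) :
    IsLimitOp (restrictOp L D) ∧
    ∀ hR : IsLimitOp (restrictOp L D),
      TopologicalSpace.induced (Subtype.val : D → X) (derivedTop L hL) =
        derivedTop (restrictOp L D) hR := by

  have hRop : IsLimitOp (restrictOp L D) := by
    intro σ φ hφ d hd
    exact hL _ φ hφ hd
  refine ⟨hRop, fun hR => ?_⟩
  have hDc : SeqClosedFor L Dᶜ := by
    have := (isClosed_derivedTop_iff L hL Dᶜ).mp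
    exact this (by rwa [@isClosed_compl_iff X (derivedTop L hL)])
  apply TopologicalSpace.ext_isClosed
  intro C
  rw [isClosed_derivedTop_iff (restrictOp L D) hR C]
  letI tD := TopologicalSpace.induced (Subtype.val : D → X) (derivedTop L hL)
  rw [show (@IsClosed _ tD C) ↔ ∃ F, @IsClosed X (derivedTop L hL) F ∧
      (Subtype.val : D → X) ⁻¹' F = C from @isClosed_induced_iff _ _ (derivedTop L hL) C _]
  constructor
  · rintro ⟨F, hF, rfl⟩
    rw [isClosed_derivedTop_iff] at hF
    intro σ hσ d hd
    exact hF (fun n => (σ n : X)) (fun n => hσ n) hd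
  · intro hC
    refine ⟨(Subtype.val '' C) ∪ Dᶜ, ?_, ?_⟩
    · rw [isClosed_derivedTop_iff]
      intro σ hσ p hp
      by_cases hinf : {n | σ n ∈ Dᶜ}.Infinite
      · refine Or.inr (hDc _ (fun n => Nat.nth_mem_of_infinite hinf n)
          (hL σ _ (Nat.nth_strictMono hinf) hp))
      · have hfin : {n | σ n ∈ Dᶜ}.Finite := Set.not_infinite.mp hinf
        have hinf2 : {n | σ n ∈ Subtype.val '' C}.Infinite :=
          Set.Infinite.mono (fun n hn => (hσ n).resolve_right hn) hfin.infinite_compl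
        set κ : ℕ → X := σ ∘ Nat.nth {n | σ n ∈ Subtype.val '' C} with hκ
        have hκmem : ∀ n, κ n ∈ Subtype.val '' C := fun n => Nat.nth_mem_of_infinite hinf2 n
        have hκD : ∀ n, κ n ∈ D := fun n => by
          obtain ⟨d, _, hd2⟩ := hκmem n
          exact hd2 ▸ d.2
        have hpκ : p ∈ L κ := hL σ _ (Nat.nth_strictMono hinf2) hp
        by_cases hpD : p ∈ D
        · left
          set σ' : ℕ → D := fun n => ⟨κ n, hκD n⟩ with hσ'
          have hσ'C : ∀ n, σ' n ∈ C := fun n => by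
            obtain ⟨d, hd1, hd2⟩ := hκmem n
            have : σ' n = d := Subtype.ext hd2.symm
            rwa [this]
          have : (⟨p, hpD⟩ : D) ∈ restrictOp L D σ' := hpκ
          exact ⟨⟨p, hpD⟩, hC σ' hσ'C this, rfl⟩
        · exact Or.inr hpD
    · ext d
      simp only [Set.preimage_union, Set.mem_union, Set.mem_preimage]
      constructor
      · rintro (hd | hd)
        · obtain ⟨e, he, he2⟩ := hd
          rwa [show d = e from Subtype.ext he2.symm]
        · exact absurd d.2 hd
      · intro hd
        exact Or.inl ⟨d, hd, rfl⟩
end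

section
/- Let (X, τ) be a sequential topological space and D ⊆ X an open subset that, with the subspace topology, is Hausdorff and locally compact. Let τ* be the topology on X generated by the subbasis τ ∪ {X \ K : K a compact subset of D}, and let (τ*)_Seq := (τ*)_{L_{τ*}} be the topology derived from the associated limit operator L_{τ*}. Then (τ*)_Seq is sequential, satisfies (A_Fin) and (A_Sep), and is contained in every sequential topology on X satisfying (A_Fin) and (A_Sep); hence it is the unique minimal topology among the sequential topologies satisfying (A_Fin) and (A_Sep). Moreover, the subspace topologies induced on D by (τ*)_Seq and by τ coincide. -/
open Set Filter Topology

universe u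

section Helpers

variable {X : Type u}

lemma isOpen_derivedTop {L : (ℕ → X) → Set X} (hL : IsLimitOp L) {U : Set X} :
    IsOpen[derivedTop L hL] U ↔ SeqClosedFor L Uᶜ := Iff.rfl

lemma tendsto_derivedTop {L : (ℕ → X) → Set X} (hL : IsLimitOp L) {σ : ℕ → X} {p : X}
    (hp : p ∈ L σ) : Tendsto σ atTop (@nhds X (derivedTop L hL) p) := by
  letI := derivedTop L hL
  rw [tendsto_nhds]
  intro U hU hpU
  by_contra h
  have hinf : {n | σ n ∉ U}.Infinite :=
    Nat.frequently_atTop_iff_infinite.mp (Filter.not_eventually.mp h)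
  exact ((isOpen_derivedTop hL).mp hU) _ (fun n => Nat.nth_mem_of_infinite hinf n)
    (hL σ _ (Nat.nth_strictMono hinf) hp) hpU

lemma seqModTop_le (s : TopologicalSpace X) {U : Set X} (hU : IsOpen[s] U) :
    IsOpen[seqModTop s] U := by
  letI := s
  intro σ hσ p hp
  intro hpU
  have hev : ∀ᶠ n in atTop, σ n ∈ U := tendsto_nhds.mp hp U hU hpU
  exact hev.exists.elim fun n hn => hσ n hn

lemma tendsto_generateFrom {S : Set (Set X)} {σ : ℕ → X} {p : X}
    (h : ∀ U ∈ S, p ∈ U → ∀ᶠ n in atTop, σ n ∈ U) :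
    Tendsto σ atTop (@nhds X (TopologicalSpace.generateFrom S) p) := by
  letI := TopologicalSpace.generateFrom S
  suffices h' : ∀ U : Set X, TopologicalSpace.GenerateOpen S U → p ∈ U →
      ∀ᶠ n in atTop, σ n ∈ U by
    rw [tendsto_nhds]; exact fun U hU => h' U hU
  intro U hU
  induction hU with
  | basic V hV => exact h V hV
  | univ => exact fun _ => Filter.Eventually.of_forall fun n => mem_univ _
  | inter V W _ _ ihV ihW => exact fun hp' => (ihV hp'.1).and (ihW hp'.2)
  | sUnion S' _ ih =>
      intro hp'
      obtain ⟨V, hVS, hpV⟩ := hp'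
      exact (ih V hVS hpV).mono fun n hn => ⟨V, hVS, hn⟩

lemma mem_of_tendsto_compact (t : TopologicalSpace X) {D K : Set X}
    (hT2 : @T2Space D (TopologicalSpace.induced (Subtype.val : D → X) t))
    (hKD : K ⊆ D) (hK : @IsCompact X t K) {σ : ℕ → X} (hσ : ∀ n, σ n ∈ K)
    {p : X} (hp : Filter.Tendsto σ atTop (@nhds X t p)) (hpD : p ∈ D) : p ∈ K := by
  letI := t
  haveI : T2Space D := hT2
  have hK' : IsCompact ((Subtype.val : D → X) ⁻¹' K) := by
    rw [IsEmbedding.subtypeVal.isCompact_iff,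
      Set.image_preimage_eq_of_subset (by rw [Subtype.range_val]; exact hKD)]
    exact hK
  have hcl : IsClosed ((Subtype.val : D → X) ⁻¹' K) := hK'.isClosed
  have hσ' : Tendsto (fun n => (⟨σ n, hKD (hσ n)⟩ : D)) atTop (𝓝 (⟨p, hpD⟩ : D)) :=
    tendsto_subtype_rng.mpr hp
  exact hcl.mem_of_tendsto hσ' (Filter.Eventually.of_forall fun n => hσ n)

lemma tendsto_sepTop_of_mem (t : TopologicalSpace X) {D : Set X}
    (hT2 : @T2Space D (TopologicalSpace.induced (Subtype.val : D → X) t))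
    {σ : ℕ → X} {p : X} (hpD : p ∈ D)
    (hp : Filter.Tendsto σ atTop (@nhds X t p)) :
    Filter.Tendsto σ atTop (@nhds X (sepTop t D) p) := by
  apply tendsto_generateFrom
  rintro U (hU | ⟨K, hKD, hK, rfl⟩) hpU
  · exact (@tendsto_nhds _ t _ _ _ _).mp hp U hU hpU
  · by_contra h
    have hinf : {n | σ n ∈ K}.Infinite := by
      have := Filter.not_eventually.mp h
      simpa [Nat.frequently_atTop_iff_infinite] using this
    exact hpU (mem_of_tendsto_compact t hT2 hKD hK
      (fun n => Nat.nth_mem_of_infinite hinf n)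
      (hp.comp (Nat.nth_strictMono hinf).tendsto_atTop) hpD)

lemma tendsto_sepTop_of_sep (t t' : TopologicalSpace X) {D : Set X}
    (hT2 : @T2Space D (TopologicalSpace.induced (Subtype.val : D → X) t))
    (hFin : AFin t t') (hSep : ASep t t' D) {σ : ℕ → X} {p : X}
    (hp : Filter.Tendsto σ atTop (@nhds X t' p)) :
    Filter.Tendsto σ atTop (@nhds X (sepTop t D) p) := by
  have hpt : Filter.Tendsto σ atTop (@nhds X t p) := by
    rw [@tendsto_nhds _ t]
    exact fun U hU hpU => (@tendsto_nhds _ t' _ _ _ _).mp hp U (hFin U hU) hpU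
  by_cases hpD : p ∈ D
  · exact tendsto_sepTop_of_mem t hT2 hpD hpt
  · apply tendsto_generateFrom
    rintro U (hU | ⟨K, hKD, hK, rfl⟩) hpU
    · exact (@tendsto_nhds _ t _ _ _ _).mp hpt U hU hpU
    · letI := t
      choose! Uf Vf hUo hVo hkU hpV hdisj using
        fun k (hk : k ∈ K) => hSep k (hKD hk) p hpD
      obtain ⟨b, hbK, hbfin, hcov⟩ := hK.elim_finite_subcover_image
        (fun k hk => hUo k hk) (fun x hx => Set.mem_biUnion hx (hkU x hx))
      have hVopen : IsOpen[t'] (⋂ k ∈ b, Vf k) := by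
        letI := t'
        exact hbfin.isOpen_biInter fun k hk => hVo k (hbK hk)
      have hpV' : p ∈ ⋂ k ∈ b, Vf k :=
        Set.mem_biInter fun k hk => hpV k (hbK hk)
      have hev : ∀ᶠ n in atTop, σ n ∈ ⋂ k ∈ b, Vf k :=
        (@tendsto_nhds _ t' _ _ _ _).mp hp _ hVopen hpV'
      refine hev.mono fun n hn hnK => ?_
      obtain ⟨k, hkb, hnU⟩ := Set.mem_iUnion₂.mp (hcov hnK)
      have : σ n ∈ Uf k ∩ Vf k := ⟨hnU, Set.mem_iInter₂.mp hn k hkb⟩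
      rw [hdisj k (hbK hkb)] at this
      exact this

end Helpers

theorem stmt_10 {X : Type u} (t : TopologicalSpace X)
    (hSeq : @SequentialSpace X t) (D : Set X) (hD : @IsOpen X t D)
    (hT2 : @T2Space D (TopologicalSpace.induced (Subtype.val : D → X) t))
    (hLC : @LocallyCompactSpace D (TopologicalSpace.induced (Subtype.val : D → X) t)) :
    @SequentialSpace X (seqModTop (sepTop t D)) ∧
    AFin t (seqModTop (sepTop t D)) ∧
    ASep t (seqModTop (sepTop t D)) D ∧
    (∀ t' : TopologicalSpace X, @SequentialSpace X t' → AFin t t' → ASep t t' D →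
      ∀ U : Set X, @IsOpen X (seqModTop (sepTop t D)) U → @IsOpen X t' U) ∧
    (∀ t'' : TopologicalSpace X, @SequentialSpace X t'' → AFin t t'' → ASep t t'' D →
      (∀ t' : TopologicalSpace X, @SequentialSpace X t' → AFin t t' → ASep t t' D →
        (∀ U : Set X, @IsOpen X t' U → @IsOpen X t'' U) →
        ∀ U : Set X, @IsOpen X t'' U → @IsOpen X t' U) →
      t'' = seqModTop (sepTop t D)) ∧
    TopologicalSpace.induced (Subtype.val : D → X) (seqModTop (sepTop t D)) =
      TopologicalSpace.induced (Subtype.val : D → X) t := by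
  set L : (ℕ → X) → Set X := assocLimOp (sepTop t D) with hL
  set ts : TopologicalSpace X := seqModTop (sepTop t D) with hts
  have part1 : @SequentialSpace X ts := by
    refine @SequentialSpace.mk X ts fun C hC => ?_
    refine ⟨?_⟩
    show SeqClosedFor L Cᶜᶜ
    rw [compl_compl]
    intro σ hσ p hp
    exact hC hσ (tendsto_derivedTop (assocLimOp_isLimitOp (sepTop t D)) hp)
  have hsepopen : ∀ U : Set X, IsOpen[sepTop t D] U → IsOpen[ts] U :=
    fun U hU => seqModTop_le _ hU
  have part2 : AFin t ts := fun U hU =>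
    hsepopen U (TopologicalSpace.GenerateOpen.basic U (Or.inl hU))
  have part3 : ASep t ts D := by
    intro p hp q hq
    letI := t
    haveI : LocallyCompactSpace D := hLC
    obtain ⟨K', hK'n, _, hK'c⟩ :=
      LocallyCompactSpace.local_compact_nhds (⟨p, hp⟩ : D) univ univ_mem
    obtain ⟨N, hNK, hNo, hpN⟩ := mem_nhds_iff.mp hK'n
    obtain ⟨W, hWo, hWN⟩ := isOpen_induced_iff.mp hNo
    refine ⟨W ∩ D, (Subtype.val '' K')ᶜ, hWo.inter hD, ?_, ⟨?_, hp⟩, ?_, ?_⟩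
    · exact hsepopen _ (TopologicalSpace.GenerateOpen.basic _
        (Or.inr ⟨_, Subtype.coe_image_subset D K',
          hK'c.image continuous_subtype_val, rfl⟩))
    · exact show (⟨p, hp⟩ : D) ∈ (Subtype.val : D → X) ⁻¹' W from hWN ▸ hpN
    · exact fun hqK => hq (Subtype.coe_image_subset D K' hqK)
    · refine Set.eq_empty_iff_forall_notMem.mpr fun x ⟨⟨hxW, hxD⟩, hxK⟩ => ?_
      have hxN : (⟨x, hxD⟩ : D) ∈ N := hWN ▸ (hxW : (⟨x, hxD⟩ : D) ∈ Subtype.val ⁻¹' W)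
      exact hxK ⟨⟨x, hxD⟩, hNK hxN, rfl⟩
  have part4 : ∀ t' : TopologicalSpace X, @SequentialSpace X t' → AFin t t' → ASep t t' D →
      ∀ U : Set X, IsOpen[ts] U → IsOpen[t'] U := by
    intro t' hS' hF' hSp' U hU
    have hU' : SeqClosedFor L Uᶜ := hU
    have hseq : @IsSeqClosed X t' Uᶜ := fun σ p hσ hlim =>
      hU' σ hσ (tendsto_sepTop_of_sep t t' hT2 hF' hSp' hlim)
    exact (@isClosed_compl_iff X t' U).mp
      (@SequentialSpace.isClosed_of_seq X t' hS' Uᶜ hseq)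
  have part5 : ∀ t'' : TopologicalSpace X, @SequentialSpace X t'' → AFin t t'' →
      ASep t t'' D →
      (∀ t' : TopologicalSpace X, @SequentialSpace X t' → AFin t t' → ASep t t' D →
        (∀ U : Set X, @IsOpen X t' U → @IsOpen X t'' U) →
        ∀ U : Set X, @IsOpen X t'' U → @IsOpen X t' U) →
      t'' = ts := by
    intro t'' h1 h2 h3 hmin
    have h4 := hmin ts part1 part2 part3 (part4 t'' h1 h2 h3)
    exact TopologicalSpace.ext (funext fun U =>
      propext ⟨fun h => h4 U h, fun h => part4 t'' h1 h2 h3 U h⟩)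
  refine ⟨part1, part2, part3, part4, part5, ?_⟩
  refine le_antisymm (induced_mono (isOpen_implies_isOpen_iff.mp part2)) ?_
  refine isOpen_implies_isOpen_iff.mp fun S hS => ?_
  obtain ⟨U, hU, rfl⟩ := isOpen_induced_iff.mp hS
  have hUD : IsOpen[t] (U ∩ D) := by
    letI := t
    haveI := hSeq
    have hsc : IsSeqClosed (U ∩ D)ᶜ := by
      intro σ p hσ hlim
      by_contra hp
      rw [Set.notMem_compl_iff] at hp
      have hDev : ∀ᶠ n in atTop, σ n ∈ D := tendsto_nhds.mp hlim D hD hp.2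
      obtain ⟨N, hN⟩ := eventually_atTop.mp hDev
      have hρ : Tendsto (fun n => σ (n + N)) atTop (𝓝 p) :=
        hlim.comp (tendsto_add_atTop_nat N)
      have hρsep := tendsto_sepTop_of_mem t hT2 hp.2 hρ
      have hU' : SeqClosedFor L Uᶜ := hU
      exact hU' _ (fun n hmem => hσ (n + N) ⟨hmem, hN (n + N) (Nat.le_add_left N n)⟩)
        hρsep hp.1
    exact isClosed_compl_iff.mp hsc.isClosed
  refine (@isOpen_induced_iff (↥D) X t _ Subtype.val).mpr ⟨U ∩ D, hUD, ?_⟩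
  ext x
  simp [x.2]
end
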